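/- The Thue–Morse sequence is at most rank-two: defining M_{0,1} = M_{0,2} = 0, and for n ≥ 0, M_{n+1,1} = M_{n,1} 1 M_{n,2}, M_{n+1,2} = M_{n,2} 1 M_{n,1} if n is odd, and M_{n+1,1} = M_{n,1} 11 M_{n,2}, M_{n+1,2} = M_{n,2} M_{n,1} if n is even, then M_{i,1} is a prefix of the Thue–Morse sequence for every i. -/

import Mathlib

/-- A block of `a` ones. -/
def ones (a : ℕ) : List Bool := List.replicate a true

/-- Words over {0,1} that begin and end with 0 (false = 0, true = 1). -/
def InF (v : List Bool) : Prop := v.head? = some false ∧ v.getLast? = some false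

/-- `w` is a prefix of the infinite word `V`. -/
def PrefixOf (w : List Bool) (V : ℕ → Bool) : Prop :=
  ∀ i, i < w.length → w.getD i false = V i

/-- Finite stages `v 1^{a 0} v 1^{a 1} v ⋯ v`. -/
def stage (v : List Bool) (a : ℕ → ℕ) : ℕ → List Bool
  | 0 => v
  | n + 1 => stage v a n ++ ones (a n) ++ v

/-- The infinite word `V` is built from `v`: `V = v 1^{a₁} v 1^{a₂} v ⋯`. -/
def BuiltFrom (V : ℕ → Bool) (v : List Bool) : Prop :=
  ∃ a : ℕ → ℕ, ∀ n, PrefixOf (stage v a n) V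

/-- A finite word `w` is built from `v`: `w = v 1^{a₁} v ⋯ v 1^{a_k} v`, `k ≥ 1`. -/
def FBuiltFrom (w v : List Bool) : Prop :=
  ∃ a : List ℕ, a ≠ [] ∧ w = v ++ (a.map fun n => ones n ++ v).flatten

/-- `A_V`, the set of words in `𝓕` from which `V` is built. -/
def AV (V : ℕ → Bool) : Set (List Bool) := {v | InF v ∧ BuiltFrom V v}

/-- `w` occurs in the infinite word `V` at position `k`. -/
def OccursAt (w : List Bool) (V : ℕ → Bool) (k : ℕ) : Prop :=
  ∀ i, i < w.length → w.getD i false = V (k + i)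

/-- `w` is a factor (contiguous subword) of the infinite word `V`. -/
def FactorOfN (w : List Bool) (V : ℕ → Bool) : Prop := ∃ k, OccursAt w V k

/-- `w` occurs in the bi-infinite word `x` at position `k`. -/
def OccursAtZ (w : List Bool) (x : ℤ → Bool) (k : ℤ) : Prop :=
  ∀ i, i < w.length → w.getD i false = x (k + (i : ℤ))

/-- `w` is a factor of the bi-infinite word `x`. -/
def FactorOfZ (w : List Bool) (x : ℤ → Bool) : Prop := ∃ k, OccursAtZ w x k

/-- The subshift associated to an infinite word `V`. -/
def Subshift (V : ℕ → Bool) : Set (ℤ → Bool) :=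
  {x | ∀ w, FactorOfZ w x → FactorOfN w V}

/-- Thue–Morse words: `M 0 = 0`, `M (n+1) = M n ++ complement (M n)`. -/
def M : ℕ → List Bool
  | 0 => [false]
  | n + 1 => M n ++ (M n).map (fun b => !b)

/-- The Thue–Morse sequence: parity of the number of 1's in binary expansion. -/
def tm (n : ℕ) : Bool := decide (((Nat.digits 2 n).count 1) % 2 = 1)

/-- Rank-two towers for the Thue–Morse sequence. -/
def M2 : ℕ → List Bool × List Bool
  | 0 => ([false], [false])
  | n + 1 =>
    if n % 2 = 1 then ((M2 n).1 ++ [true] ++ (M2 n).2, (M2 n).2 ++ [true] ++ (M2 n).1)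
    else ((M2 n).1 ++ [true, true] ++ (M2 n).2, (M2 n).2 ++ (M2 n).1)


lemma tm_zero : tm 0 = false := by simp [tm]

lemma tm_two_mul (n : ℕ) : tm (2 * n) = tm n := by
  rcases Nat.eq_zero_or_pos n with rfl | hn
  · rfl
  · unfold tm
    rw [Nat.digits_def' (by norm_num : 1 < 2) (by omega)]
    have h1 : (2 * n) % 2 = 0 := by omega
    have h2 : (2 * n) / 2 = n := by omega
    rw [h1, h2, List.count_cons]
    simp

lemma tm_two_mul_add_one (n : ℕ) : tm (2 * n + 1) = !tm n := by
  unfold tm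
  rw [Nat.digits_def' (by norm_num : 1 < 2) (by omega)]
  have h1 : (2 * n + 1) % 2 = 1 := by omega
  have h2 : (2 * n + 1) / 2 = n := by omega
  rw [h1, h2, List.count_cons]
  simp only [beq_self_eq_true, if_true]
  by_cases h : List.count 1 (Nat.digits 2 n) % 2 = 1 <;> simp [h] <;> omega

lemma tm_pow_add (n : ℕ) : ∀ j, j < 2 ^ n → tm (2 ^ n + j) = !tm j := by
  induction n with
  | zero =>
    intro j hj
    interval_cases j
    show tm 1 = !tm 0
    rw [tm_zero]; rw [show (1:ℕ) = 2*0+1 from rfl, tm_two_mul_add_one, tm_zero]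
  | succ n ih =>
    intro j hj
    rcases Nat.even_or_odd' j with ⟨k, rfl | rfl⟩
    · have hk : k < 2 ^ n := by rw [pow_succ] at hj; omega
      have h : 2 ^ (n+1) + 2 * k = 2 * (2 ^ n + k) := by rw [pow_succ]; ring
      rw [h, tm_two_mul, ih k hk, tm_two_mul]
    · have hk : k < 2 ^ n := by rw [pow_succ] at hj; omega
      have h : 2 ^ (n+1) + (2 * k + 1) = 2 * (2 ^ n + k) + 1 := by rw [pow_succ]; ring
      rw [h, tm_two_mul_add_one, ih k hk, tm_two_mul_add_one]

lemma M_length (n : ℕ) : (M n).length = 2 ^ n := by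
  induction n with
  | zero => rfl
  | succ n ih => simp [M, ih, pow_succ]; ring

lemma M_prefix (n : ℕ) : PrefixOf (M n) tm := by
  induction n with
  | zero =>
    intro i hi
    simp [M] at hi; subst hi
    simpa [M] using tm_zero.symm
  | succ n ih =>
    intro i hi
    simp only [M, List.length_append, List.length_map, M_length] at hi
    by_cases h : i < 2 ^ n
    · rw [show M (n+1) = M n ++ (M n).map (fun b => !b) from rfl,
        List.getD_append _ _ _ _ (by rw [M_length]; exact h)]
      exact ih i (by rw [M_length]; exact h)
    · have h2 : 2 ^ n ≤ i := le_of_not_gt h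
      obtain ⟨j, rfl⟩ : ∃ j, i = 2 ^ n + j := ⟨i - 2 ^ n, by omega⟩
      have hj : j < 2 ^ n := by omega
      rw [show M (n+1) = M n ++ (M n).map (fun b => !b) from rfl,
        List.getD_append_right _ _ _ _ (by rw [M_length]; omega)]
      rw [M_length]
      have hjl : j < ((M n).map (fun b => !b)).length := by
        simp [M_length]; exact hj
      rw [show 2 ^ n + j - 2 ^ n = j from by omega,
        List.getD_eq_getElem _ _ hjl, List.getElem_map,
        tm_pow_add n j hj]
      have hh := ih j (by rw [M_length]; exact hj)
      rw [List.getD_eq_getElem _ _ (by rw [M_length]; exact hj)] at hh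
      rw [hh]

lemma map_not_not (l : List Bool) : (l.map (fun b => !b)).map (fun b => !b) = l := by
  simp [List.map_map, Function.comp_def]

lemma M2_odd (k : ℕ) : (M2 (2*k+1)).1 = M (2*k+2) ∧
    (M (2*k+2)).map (fun b => !b) = true :: ((M2 (2*k+1)).2 ++ [true]) := by
  induction k with
  | zero => exact ⟨rfl, rfl⟩
  | succ k ih =>
    obtain ⟨ha, hb⟩ := ih
    have p1 : (2*k+1) % 2 = 1 := by omega
    have p2 : (2*k+2) % 2 = 0 := by omega
    have e1 : M2 (2*k+2) = ((M2 (2*k+1)).1 ++ [true] ++ (M2 (2*k+1)).2,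
        (M2 (2*k+1)).2 ++ [true] ++ (M2 (2*k+1)).1) := by
      rw [show 2*k+2 = (2*k+1)+1 from rfl, M2]; simp [p1]
    have e2 : M2 (2*(k+1)+1) = ((M2 (2*k+2)).1 ++ [true, true] ++ (M2 (2*k+2)).2,
        (M2 (2*k+2)).2 ++ (M2 (2*k+2)).1) := by
      rw [show 2*(k+1)+1 = (2*k+2)+1 from rfl, M2]; simp [p2]
    set a := (M2 (2*k+1)).1
    set b := (M2 (2*k+1)).2
    have hM3 : M (2*k+3) = a ++ (true :: (b ++ [true])) := by
      rw [show 2*k+3 = (2*k+2)+1 from rfl, M, hb, ← ha]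
    have hM3n : (M (2*k+3)).map (fun b => !b) = (true :: (b ++ [true])) ++ a := by
      rw [show 2*k+3 = (2*k+2)+1 from rfl, M, List.map_append, map_not_not, hb, ← ha]
    constructor
    · rw [show 2*(k+1)+2 = (2*k+3)+1 from rfl, M, hM3n, hM3, e2, e1]; simp
    · rw [show 2*(k+1)+2 = (2*k+3)+1 from rfl, M, List.map_append, map_not_not, hM3n, hM3,
        e2, e1]
      simp

lemma prefixOf_mono {u w : List Bool} {V : ℕ → Bool} (h : u <+: w) (hw : PrefixOf w V) :
    PrefixOf u V := by
  intro i hi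
  obtain ⟨t, rfl⟩ := h
  rw [← List.getD_append _ t false _ hi]
  exact hw i (by simp; omega)

theorem stmt17 : ∀ i, PrefixOf (M2 i).1 tm := by
  intro i
  rcases Nat.even_or_odd' i with ⟨k, rfl | rfl⟩
  · match k with
    | 0 =>
      intro i hi
      simp [M2] at hi
      subst hi
      simpa [M2] using tm_zero.symm
    | m + 1 =>
      obtain ⟨ha, hb⟩ := M2_odd m
      have p1 : (2*m+1) % 2 = 1 := by omega
      have e1 : M2 (2*m+2) = ((M2 (2*m+1)).1 ++ [true] ++ (M2 (2*m+1)).2,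
          (M2 (2*m+1)).2 ++ [true] ++ (M2 (2*m+1)).1) := by
        rw [show 2*m+2 = (2*m+1)+1 from rfl, M2]; simp [p1]
      have hM3 : M (2*m+3) = (M2 (2*m+1)).1 ++ (true :: ((M2 (2*m+1)).2 ++ [true])) := by
        rw [show 2*m+3 = (2*m+2)+1 from rfl, M, hb, ← ha]
      have hpre : (M2 (2*(m+1))).1 <+: M (2*m+3) := by
        refine ⟨[true], ?_⟩
        rw [hM3, show 2*(m+1) = 2*m+2 from by ring, e1]
        simp
      exact prefixOf_mono hpre (M_prefix _)
  · rw [(M2_odd k).1]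
    exact M_prefix _
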